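/- For every odd integer n > 1, the q-binomial coefficient qbinom(n, (n-1)/2) is divisible by [n] = 1+q+···+q^{n-1} in ℤ[q], and consequently qbinom(n+1, (n+1)/2) is also divisible by [n] in ℤ[q]. -/

import Mathlib

open RatFunc

noncomputable def q : RatFunc ℚ := RatFunc.X

/-- q-shifted factorial `(a;b)_m = ∏_{j=0}^{m-1} (1 - a b^j)`. -/
noncomputable def qpoch (a b : RatFunc ℚ) (m : ℕ) : RatFunc ℚ :=
  ∏ j ∈ Finset.range m, (1 - a * b ^ j)

/-- q-integer `[m] = (1-q^m)/(1-q)` for an arbitrary integer `m`. -/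
noncomputable def qintZ (m : ℤ) : RatFunc ℚ := (1 - q ^ m) / (1 - q)

/-- q-integer `[m] = 1 + q + ⋯ + q^{m-1}`. -/
noncomputable def qint (m : ℕ) : RatFunc ℚ := ∑ i ∈ Finset.range m, q ^ i

/-- q-binomial coefficient `(q;q)_n / ((q;q)_k (q;q)_{n-k})`. -/
noncomputable def qbinom (n k : ℕ) : RatFunc ℚ :=
  qpoch q q n / (qpoch q q k * qpoch q q (n - k))

/-- the natural inclusion `ℤ[q] → ℚ(q)` -/
noncomputable def ι (P : Polynomial ℤ) : RatFunc ℚ :=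
  algebraMap (Polynomial ℚ) (RatFunc ℚ) (P.map (Int.castRingHom ℚ))

/-- `[n] = 1 + q + ⋯ + q^{n-1}` in `ℤ[q]` -/
noncomputable def qintPZ (n : ℕ) : Polynomial ℤ := ∑ i ∈ Finset.range n, Polynomial.X ^ i

lemma q_eq : q = algebraMap (Polynomial ℚ) (RatFunc ℚ) Polynomial.X := (RatFunc.algebraMap_X).symm
lemma one_sub_q_pow_ne_zero (m : ℕ) : (1 : RatFunc ℚ) - q ^ (m+1) ≠ 0 := by
  rw [sub_ne_zero, q_eq, ← map_pow, ← map_one (algebraMap (Polynomial ℚ) (RatFunc ℚ))]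
  intro h
  have := IsFractionRing.injective (Polynomial ℚ) (RatFunc ℚ) h
  have := congrArg Polynomial.natDegree this
  simp [Polynomial.natDegree_X_pow] at this
lemma qpoch_ne_zero (m : ℕ) : qpoch q q m ≠ 0 := by
  rw [qpoch]
  apply Finset.prod_ne_zero_iff.mpr
  intro j _
  have := one_sub_q_pow_ne_zero j
  rw [pow_succ'] at this
  exact this
lemma qpoch_succ (m : ℕ) : qpoch q q (m+1) = qpoch q q m * (1 - q^(m+1)) := by
  rw [qpoch, qpoch, Finset.prod_range_succ]; ring

-- ι as ring hom
noncomputable def ιHom : Polynomial ℤ →+* RatFunc ℚ :=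
  (algebraMap (Polynomial ℚ) (RatFunc ℚ)).comp (Polynomial.mapRingHom (Int.castRingHom ℚ))

lemma ι_eq (P : Polynomial ℤ) : ι P = ιHom P := rfl

lemma ι_X : ι Polynomial.X = q := by
  rw [ι, Polynomial.map_X, ← q_eq]

lemma ι_injective : Function.Injective ι := by
  intro a b h
  rw [ι, ι] at h
  exact Polynomial.map_injective _ Int.cast_injective
    (IsFractionRing.injective (Polynomial ℚ) (RatFunc ℚ) h)

-- Gaussian binomial polynomial
noncomputable def G : ℕ → ℕ → Polynomial ℤ
  | 0, 0 => 1
  | 0, _+1 => 0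
  | _+1, 0 => 1
  | n+1, k+1 => G n k + Polynomial.X^(k+1) * G n (k+1)

lemma G_zero_right (n : ℕ) : G n 0 = 1 := by cases n <;> rfl

lemma G_eq_zero : ∀ n k : ℕ, n < k → G n k = 0 := by
  intro n
  induction n with
  | zero => intro k h; match k, h with | k+1, _ => rfl
  | succ n ih =>
    intro k h
    match k, h with
    | k+1, h =>
      show G n k + Polynomial.X^(k+1) * G n (k+1) = 0
      rw [ih k (by omega), ih (k+1) (by omega)]; ring

lemma G_diag : ∀ n : ℕ, G n n = 1 := by
  intro n
  induction n with
  | zero => rfl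
  | succ n ih =>
    show G n n + Polynomial.X^(n+1) * G n (n+1) = 1
    rw [ih, G_eq_zero n (n+1) (by omega)]; ring

lemma qbinom_eq_of (n k d : ℕ) (h : n = k + d) :
    qbinom n k = qpoch q q n / (qpoch q q k * qpoch q q d) := by
  subst h; rw [qbinom, Nat.add_sub_cancel_left]

lemma qbinom_self (m : ℕ) : qbinom m m = 1 := by
  rw [qbinom_eq_of m m 0 rfl]
  rw [show qpoch q q 0 = 1 from rfl, mul_one, div_self (qpoch_ne_zero m)]

lemma qbinom_zero (n : ℕ) : qbinom n 0 = 1 := by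
  rw [qbinom_eq_of n 0 n (by omega)]
  rw [show qpoch q q 0 = 1 from rfl, one_mul, div_self (qpoch_ne_zero n)]

lemma pascal (k d : ℕ) :
    qbinom (k+1+d+1) (k+1) = qbinom (k+1+d) k + q^(k+1) * qbinom (k+1+d) (k+1) := by
  rw [qbinom_eq_of (k+1+d+1) (k+1) (d+1) (by omega),
      qbinom_eq_of (k+1+d) k (d+1) (by omega),
      qbinom_eq_of (k+1+d) (k+1) d (by omega),
      show k+1+d+1 = (k+1+d)+1 from rfl, qpoch_succ (k+1+d), qpoch_succ k, qpoch_succ d]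
  have hA := qpoch_ne_zero k
  have hB := qpoch_ne_zero d
  have hC := qpoch_ne_zero (k+1+d)
  have h1 := one_sub_q_pow_ne_zero k
  have h2 := one_sub_q_pow_ne_zero d
  field_simp
  ring

lemma G_spec : ∀ n k : ℕ, k ≤ n → qbinom n k = ι (G n k) := by
  intro n
  induction n with
  | zero =>
    intro k hk
    interval_cases k
    rw [qbinom_zero, G_zero_right]
    simp [ι_eq, map_one]
  | succ n ih =>
    intro k hk
    match k with
    | 0 => rw [qbinom_zero, G_zero_right]; simp [ι_eq, map_one]
    | k+1 =>
      rcases eq_or_lt_of_le hk with h | h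
      · rw [← h] at *
        rw [qbinom_self, G_diag]; simp [ι_eq, map_one]
      · have hk' : k + 1 ≤ n := by omega
        obtain ⟨d, hd⟩ : ∃ d, n = k + 1 + d := ⟨n - (k+1), by omega⟩
        subst hd
        rw [pascal k d, ih k (by omega), ih (k+1) (by omega)]
        show _ = ι (G (k+1+d) k + Polynomial.X^(k+1) * G (k+1+d) (k+1))
        rw [ι_eq, ι_eq, ι_eq, map_add, map_mul, map_pow, ← ι_eq, ← ι_eq, ← ι_eq, ι_X]

-- divisibility facts in ℤ[X]
lemma qintPZ_mul_X_sub_one (m : ℕ) :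
    qintPZ m * (Polynomial.X - 1) = Polynomial.X^m - 1 := geom_sum_mul _ _

lemma qintPZ_dvd (m : ℕ) : qintPZ m ∣ (Polynomial.X : Polynomial ℤ)^m - 1 :=
  ⟨Polynomial.X - 1, (qintPZ_mul_X_sub_one m).symm⟩

lemma X_sub_one_dvd_qintPZ_sub (m : ℕ) :
    (Polynomial.X - 1 : Polynomial ℤ) ∣ qintPZ m - (m : Polynomial ℤ) := by
  have : qintPZ m - (m : Polynomial ℤ)
      = ∑ i ∈ Finset.range m, ((Polynomial.X : Polynomial ℤ)^i - 1) := by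
    rw [Finset.sum_sub_distrib, qintPZ]
    simp
  rw [this]
  apply Finset.dvd_sum
  intro i _
  exact ⟨∑ j ∈ Finset.range i, Polynomial.X^j, by rw [mul_comm]; exact (geom_sum_mul _ _).symm⟩

lemma relprime (m : ℕ) : IsRelPrime (qintPZ (2*m+1)) (qintPZ (m+1)) := by
  intro d hd1 hd2
  have h1 : d ∣ (Polynomial.X : Polynomial ℤ)^(2*m+1) - 1 := hd1.trans (qintPZ_dvd _)
  have h2 : d ∣ (Polynomial.X : Polynomial ℤ)^(m+1) - 1 := hd2.trans (qintPZ_dvd _)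
  have h3 : d ∣ (Polynomial.X : Polynomial ℤ)^(2*m+2) - 1 := by
    refine h2.trans ⟨Polynomial.X^(m+1) + 1, ?_⟩
    rw [show 2*m+2 = (m+1)+(m+1) by omega, pow_add]; ring
  have h4 : d ∣ (Polynomial.X - 1 : Polynomial ℤ) := by
    have he : (Polynomial.X - 1 : Polynomial ℤ)
        = ((Polynomial.X : Polynomial ℤ)^(2*m+2) - 1)
          - Polynomial.X * ((Polynomial.X : Polynomial ℤ)^(2*m+1) - 1) := by
      rw [show 2*m+2 = (2*m+1)+1 by omega, pow_succ]; ring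
    rw [he]
    exact dvd_sub h3 (Dvd.dvd.mul_left h1 Polynomial.X)
  have h5 : d ∣ ((2*m+1 : ℕ) : Polynomial ℤ) := by
    have ha := h4.trans (X_sub_one_dvd_qintPZ_sub (2*m+1))
    have hb := dvd_sub hd1 ha
    simpa using hb
  have hC : (((2*m+1:ℕ)) : Polynomial ℤ) ≠ 0 := Nat.cast_ne_zero.mpr (by omega)
  have hdeg : d.natDegree = 0 := by
    have hle := Polynomial.natDegree_le_of_dvd h5 hC
    simp only [Polynomial.natDegree_natCast] at hle
    omega
  obtain ⟨c, hc⟩ := Polynomial.natDegree_eq_zero.mp hdeg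
  subst hc
  obtain ⟨e, he⟩ := h4
  have hu : (1 : ℤ) = c * e.coeff 1 := by
    have hco := congrArg (fun p => Polynomial.coeff p 1) he
    simpa [Polynomial.coeff_C_mul, Polynomial.coeff_one] using hco
  exact Polynomial.isUnit_C.mpr (IsUnit.of_mul_eq_one _ hu.symm)

lemma ι_qintPZ (m : ℕ) : ι (qintPZ m) = ∑ i ∈ Finset.range m, q ^ i := by
  rw [qintPZ, ι_eq, map_sum]
  apply Finset.sum_congr rfl
  intro i _
  rw [map_pow, ← ι_eq, ι_X]

lemma q_sub_one_ne_zero : (q : RatFunc ℚ) - 1 ≠ 0 := by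
  have := one_sub_q_pow_ne_zero 0
  rw [pow_one] at this
  intro h
  apply this
  rw [sub_eq_zero] at h ⊢
  exact h.symm

/-- key identity: `[2m+1] * qbinom(2m, m) = [m+1] * qbinom(2m+1, m)` -/
lemma key_identity (m : ℕ) :
    ι (qintPZ (2*m+1)) * qbinom (2*m) m = ι (qintPZ (m+1)) * qbinom (2*m+1) m := by
  rw [ι_qintPZ, ι_qintPZ,
      qbinom_eq_of (2*m) m m (by omega), qbinom_eq_of (2*m+1) m (m+1) (by omega),
      qpoch_succ m, show (2*m+1) = (2*m)+1 from rfl, qpoch_succ (2*m)]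
  have hm := qpoch_ne_zero m
  have h2m := qpoch_ne_zero (2*m)
  have h1 := one_sub_q_pow_ne_zero m
  have h2 := one_sub_q_pow_ne_zero (2*m)
  have hred : (∑ i ∈ Finset.range (2*m+1), q ^ i) * (1 - q^(m+1))
      = (∑ i ∈ Finset.range (m+1), q ^ i) * (1 - q^(2*m+1)) := by
    apply mul_right_cancel₀ q_sub_one_ne_zero
    rw [mul_right_comm, geom_sum_mul, mul_right_comm, geom_sum_mul]
    ring
  field_simp
  linear_combination hred

lemma ι_mul (a b : Polynomial ℤ) : ι (a * b) = ι a * ι b := by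
  rw [ι_eq, ι_eq, ι_eq, map_mul]

lemma ι_one_add_pow (m : ℕ) : ι (1 + Polynomial.X ^ m) = 1 + q ^ m := by
  rw [ι_eq, map_add, map_one, map_pow, ← ι_eq, ι_X]

lemma double (m : ℕ) : qbinom (2*m+2) (m+1) = (1 + q^(m+1)) * qbinom (2*m+1) m := by
  rw [qbinom_eq_of (2*m+2) (m+1) (m+1) (by omega), qbinom_eq_of (2*m+1) m (m+1) (by omega),
      show (2*m+2) = (2*m+1)+1 from rfl, qpoch_succ (2*m+1), qpoch_succ m]
  have hm := qpoch_ne_zero m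
  have h2 := qpoch_ne_zero (2*m+1)
  have h1 := one_sub_q_pow_ne_zero m
  field_simp
  ring


/-- `[n]` divides both `qbinom(n,(n-1)/2)` and `qbinom(n+1,(n+1)/2)` in `ℤ[q]`:
the quotients are polynomials with integer coefficients. -/
theorem qbinom_divisible (n : ℕ) (hn : Odd n) (hn1 : 1 < n) :
    (∃ c : Polynomial ℤ, qbinom n ((n - 1) / 2) = ι (qintPZ n * c)) ∧
    (∃ c : Polynomial ℤ, qbinom (n + 1) ((n + 1) / 2) = ι (qintPZ n * c)) := by
  obtain ⟨m, hm⟩ := hn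
  subst hm
  have e1 : (2*m+1-1)/2 = m := by omega
  have e2 : (2*m+1+1)/2 = m+1 := by omega
  have hB : qbinom (2*m+1) m = ι (G (2*m+1) m) := G_spec _ _ (by omega)
  have hA : qbinom (2*m) m = ι (G (2*m) m) := G_spec _ _ (by omega)
  have hpoly : qintPZ (2*m+1) * G (2*m) m = qintPZ (m+1) * G (2*m+1) m := by
    apply ι_injective
    rw [ι_mul, ι_mul, ← hA, ← hB]
    exact key_identity m
  have hdvd : qintPZ (2*m+1) ∣ G (2*m+1) m :=
    (relprime m).dvd_of_dvd_mul_left ⟨G (2*m) m, hpoly.symm⟩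
  obtain ⟨c, hc⟩ := hdvd
  refine ⟨⟨c, ?_⟩, ⟨(1 + Polynomial.X^(m+1)) * c, ?_⟩⟩
  · rw [e1, hB, hc]
  · rw [e2, show 2*m+1+1 = 2*m+2 from rfl, double m, hB, hc, ι_mul, ι_mul, ι_mul, ι_one_add_pow]
    ring
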